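/- Non-termination yields an unbounded function: if A terminates on all oracles but A_ω fails to terminate on oracles φ_1 : X^ℕ → ℕ and φ_2 : X^ℕ → Y, then there exists γ : ℕ → X such that for all N ∈ ℕ, N ≤ φ_1(γ̄(N)::0^ω), where γ̄(N) is the initial segment of γ of length N. -/

import Mathlib

section
variable {R X Y : Type*}
variable (ξA : R → X) (ρA : List X → R) (QA : Set R)
variable (EA : Set (R × Option Y))
variable (stepA : R × Option Y → Option (R × Option Y)) (x0 : X)

/-- States of the dependent-choice algorithm `A_ω`: a register `(σ, a) ∈ R* × X*` together
with the two answer tapes (for the oracles `φ₁ : X^ℕ → ℕ` and `φ₂ : X^ℕ → Y`). -/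
abbrev StateW (R X Y : Type*) : Type _ := (List R × List X) × Option ℕ × Option Y

/-- The query map of `A_ω`: `ξ_ω(σ, a) := ξ*(σ) :: a :: 0,0,…`. -/
def xiW (σ : List R) (a : List X) : ℕ → X := fun n => ((σ.map ξA) ++ a).getD n x0

/-- Non-oracle transitions of `A_ω` (rules (a), (b), (c-i), (c-ii), (c-iii)). -/
inductive StepW : StateW R X Y → StateW R X Y → Prop
  | ruleA (σ : List R) (n : ℕ) :
      StepW ((σ, []), some n, none) ((σ ++ [ρA (σ.map ξA)], []), none, none)
  | ruleB (σ : List R) (r : R) (a : List X) (n : ℕ) (y : Y) :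
      (r, some y) ∈ EA →
      StepW ((σ ++ [r], a), some n, some y) ((σ, ξA r :: a), some n, some y)
  | ruleCi (σ : List R) (r r' : R) :
      stepA (r, none) = some (r', none) →
      StepW ((σ ++ [r], []), none, none) ((σ ++ [r'], []), none, none)
  | ruleCii (σ : List R) (r r' : R) (a : List X) (n : ℕ) (y : Y) :
      stepA (r, some y) = some (r', none) →
      StepW ((σ ++ [r], a), some n, some y) ((σ ++ [r'], []), none, none)
  | ruleCiii (σ : List R) (r r' : R) (a : List X) (n : ℕ) (y : Y) :
      stepA (r, some y) = some (r', some y) →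
      StepW ((σ ++ [r], a), some n, some y) ((σ ++ [r'], a), some n, some y)

/-- First-oracle query states `Q₁` of `A_ω`. -/
def Q1W (s : StateW R X Y) : Prop :=
  ∃ (σ : List R) (r : R), s = ((σ ++ [r], []), none, none) ∧ r ∈ QA

/-- Second-oracle query states `Q₂` of `A_ω`. -/
def Q2W (s : StateW R X Y) : Prop :=
  ∃ (σ : List R) (n : ℕ), s = ((σ, []), some n, none) ∧ n < σ.length

/-- End states of `A_ω`. -/
def EW (s : StateW R X Y) : Prop :=
  ∃ (a : List X) (n : ℕ) (y : Y), s = (([], a), some n, some y)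

/-- One step of `A_ω` on oracles `φ₁, φ₂`: oracle transitions at the query states,
otherwise a transition via `StepW`. -/
inductive OStepW (φ1 : (ℕ → X) → ℕ) (φ2 : (ℕ → X) → Y) :
    StateW R X Y → StateW R X Y → Prop
  | q1 (σ : List R) (r : R) : r ∈ QA →
      OStepW φ1 φ2 ((σ ++ [r], []), none, none)
        ((σ ++ [r], []), some (φ1 (xiW ξA x0 (σ ++ [r]) [])), none)
  | q2 (σ : List R) (n : ℕ) : n < σ.length →
      OStepW φ1 φ2 ((σ, []), some n, none)
        ((σ, []), some n, some (φ2 (xiW ξA x0 σ [])))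
  | tr (s t : StateW R X Y) : ¬ Q1W QA s → ¬ Q2W s →
      StepW ξA ρA EA stepA s t → OStepW φ1 φ2 s t

/-- Reachability in `A_ω` on oracles `φ₁, φ₂` (no end state before the last). -/
inductive ReachesW (φ1 : (ℕ → X) → ℕ) (φ2 : (ℕ → X) → Y) :
    StateW R X Y → StateW R X Y → Prop
  | refl (s : StateW R X Y) : ReachesW φ1 φ2 s s
  | head {s t u : StateW R X Y} : ¬ EW s →
      OStepW ξA ρA QA EA stepA x0 φ1 φ2 s t → ReachesW φ1 φ2 t u → ReachesW φ1 φ2 s u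

/-- Reachability on oracle `f` for the original algorithm `A` of sort `X*, X, Y`. -/
inductive ReachesA (f : X → Y) : R × Option Y → R × Option Y → Prop
  | refl (s : R × Option Y) : ReachesA f s s
  | oracle {r : R} {t : R × Option Y} : (r, (none : Option Y)) ∉ EA → r ∈ QA →
      ReachesA f (r, some (f (ξA r))) t → ReachesA f (r, none) t
  | step {s s' t : R × Option Y} : s ∉ EA → (s.2 = none → s.1 ∉ QA) →
      stepA s = some s' → ReachesA f s' t → ReachesA f s t

/-! ### Auxiliary development for the nontermination theorem -/

/-- A bundle of all the data of the algorithm `A` and the oracles. -/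
structure PWData (R X Y : Type*) where
  xi : R → X
  rho : List X → R
  qa : Set R
  ea : Set (R × Option Y)
  stp : R × Option Y → Option (R × Option Y)
  xz : X
  p1 : (ℕ → X) → ℕ
  p2 : (ℕ → X) → Y

/-- Padding of a finite list with `x0`. -/
def pwPad (P : PWData R X Y) (u : List X) : ℕ → X := fun n => u.getD n P.xz

open Classical in
/-- The canonical (pop-preferring) step function of `A_ω`, relativized to a base pattern `v`. -/
noncomputable def pwStep (P : PWData R X Y) (v : List X) :
    StateW R X Y → Option (StateW R X Y) := fun s =>
  match s with
  | ((σ, a), none, none) =>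
    match a, σ.getLast? with
    | [], some r =>
      if r ∈ P.qa then
        some ((σ, []), some (P.p1 (pwPad P (v ++ σ.map P.xi))), none)
      else
        match P.stp (r, none) with
        | some (r', none) => some ((σ.dropLast ++ [r'], []), none, none)
        | _ => none
    | _, _ => none
  | ((σ, a), some n, none) =>
    match a, σ with
    | [], s₀ :: σ₀ =>
      if n < v.length + (s₀ :: σ₀).length then
        some ((s₀ :: σ₀, []), some n, some (P.p2 (pwPad P (v ++ (s₀ :: σ₀).map P.xi))))
      else
        some (((s₀ :: σ₀) ++ [P.rho (v ++ (s₀ :: σ₀).map P.xi)], []), none, none)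
    | _, _ => none
  | ((σ, a), some n, some y) =>
    match σ.getLast? with
    | some r =>
      if (r, some y) ∈ P.ea then
        some ((σ.dropLast, P.xi r :: a), some n, some y)
      else
        match P.stp (r, some y) with
        | some (r', none) => some ((σ.dropLast ++ [r'], []), none, none)
        | some (r', some _) => some ((σ.dropLast ++ [r'], a), some n, some y)
        | none => none
    | none => none
  | ((_, _), none, some _) => none

lemma pwStep_q1 (P : PWData R X Y) (v : List X) (σ' : List R) (r : R) (hq : r ∈ P.qa) :
    pwStep P v ((σ' ++ [r], []), none, none) =
      some ((σ' ++ [r], []), some (P.p1 (pwPad P (v ++ (σ' ++ [r]).map P.xi))), none) := by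
  simp [pwStep, List.getLast?_concat, hq]

lemma pwStep_ci (P : PWData R X Y) (v : List X) (σ' : List R) (r r' : R)
    (hq : r ∉ P.qa) (hs : P.stp (r, none) = some (r', none)) :
    pwStep P v ((σ' ++ [r], []), none, none) = some ((σ' ++ [r'], []), none, none) := by
  simp [pwStep, List.getLast?_concat, hq, hs, List.dropLast_concat]

lemma pwStep_ci_none (P : PWData R X Y) (v : List X) (σ' : List R) (r : R)
    (hq : r ∉ P.qa) (hs : P.stp (r, none) = none) :
    pwStep P v ((σ' ++ [r], []), none, none) = none := by
  simp [pwStep, List.getLast?_concat, hq, hs]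

lemma pwStep_ci_bad (P : PWData R X Y) (v : List X) (σ' : List R) (r r' : R) (y : Y)
    (hq : r ∉ P.qa) (hs : P.stp (r, none) = some (r', some y)) :
    pwStep P v ((σ' ++ [r], []), none, none) = none := by
  simp [pwStep, List.getLast?_concat, hq, hs]

lemma pwStep_q2 (P : PWData R X Y) (v : List X) (σ : List R) (n : ℕ)
    (hne : σ ≠ []) (hlt : n < v.length + σ.length) :
    pwStep P v ((σ, []), some n, none) =
      some ((σ, []), some n, some (P.p2 (pwPad P (v ++ σ.map P.xi)))) := by
  cases σ with
  | nil => exact absurd rfl hne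
  | cons s₀ σ₀ => simp only [List.length_cons] at hlt; simp [pwStep, hlt]

lemma pwStep_ruleA (P : PWData R X Y) (v : List X) (σ : List R) (n : ℕ)
    (hne : σ ≠ []) (hge : ¬ n < v.length + σ.length) :
    pwStep P v ((σ, []), some n, none) =
      some ((σ ++ [P.rho (v ++ σ.map P.xi)], []), none, none) := by
  cases σ with
  | nil => exact absurd rfl hne
  | cons s₀ σ₀ => simp only [List.length_cons] at hge; simp [pwStep, hge]

lemma pwStep_pop (P : PWData R X Y) (v : List X) (σ' : List R) (r : R) (a : List X)
    (n : ℕ) (y : Y) (hEA : (r, some y) ∈ P.ea) :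
    pwStep P v ((σ' ++ [r], a), some n, some y) =
      some ((σ', P.xi r :: a), some n, some y) := by
  simp [pwStep, List.getLast?_concat, hEA, List.dropLast_concat]

lemma pwStep_cii (P : PWData R X Y) (v : List X) (σ' : List R) (r r' : R) (a : List X)
    (n : ℕ) (y : Y) (hEA : (r, some y) ∉ P.ea) (hs : P.stp (r, some y) = some (r', none)) :
    pwStep P v ((σ' ++ [r], a), some n, some y) = some ((σ' ++ [r'], []), none, none) := by
  simp [pwStep, List.getLast?_concat, hEA, hs, List.dropLast_concat]

lemma pwStep_ciii (P : PWData R X Y) (v : List X) (σ' : List R) (r r' : R) (a : List X)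
    (n : ℕ) (y y' : Y) (hEA : (r, some y) ∉ P.ea) (hs : P.stp (r, some y) = some (r', some y')) :
    pwStep P v ((σ' ++ [r], a), some n, some y) = some ((σ' ++ [r'], a), some n, some y) := by
  simp [pwStep, List.getLast?_concat, hEA, hs, List.dropLast_concat]

lemma pwStep_peel_none (P : PWData R X Y) (v : List X) (σ' : List R) (r : R) (a : List X)
    (n : ℕ) (y : Y) (hEA : (r, some y) ∉ P.ea) (hs : P.stp (r, some y) = none) :
    pwStep P v ((σ' ++ [r], a), some n, some y) = none := by
  simp [pwStep, List.getLast?_concat, hEA, hs]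

lemma pwStep_nil (P : PWData R X Y) (v : List X) (a : List X) (pn : Option ℕ) (py : Option Y) :
    pwStep P v ((([] : List R), a), pn, py) = none := by
  rcases pn with _ | n <;> rcases py with _ | y <;> rcases a with _ | ⟨x, xs⟩ <;>
    simp [pwStep]

lemma pwStep_a_nn (P : PWData R X Y) (v : List X) (σ : List R) (x : X) (xs : List X) :
    pwStep P v ((σ, x :: xs), none, none) = none := by
  simp [pwStep]

lemma pwStep_a_sn (P : PWData R X Y) (v : List X) (σ : List R) (x : X) (xs : List X) (n : ℕ) :
    pwStep P v ((σ, x :: xs), some n, none) = none := by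
  simp [pwStep]

lemma pwStep_ns (P : PWData R X Y) (v : List X) (σ : List R) (a : List X) (y : Y) :
    pwStep P v ((σ, a), none, some y) = none := by
  simp [pwStep]

/-- The canonical run of the relativized machine, starting from a fresh register. -/
noncomputable def pwRun (P : PWData R X Y) (v : List X) : ℕ → Option (StateW R X Y)
  | 0 => some (([P.rho v], []), none, none)
  | k + 1 => (pwRun P v k).bind (pwStep P v)

lemma pwRun_succ (P : PWData R X Y) (v : List X) (k : ℕ) :
    pwRun P v (k + 1) = (pwRun P v k).bind (pwStep P v) := rfl

lemma pwRun_step (P : PWData R X Y) {v : List X} {k : ℕ} {s t : StateW R X Y}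
    (h1 : pwRun P v k = some s) (h2 : pwStep P v s = some t) :
    pwRun P v (k + 1) = some t := by
  rw [pwRun_succ, h1]; exact h2

lemma pwRun_none_mono (P : PWData R X Y) {v : List X} {k : ℕ}
    (h : pwRun P v k = none) {m : ℕ} (hm : k ≤ m) : pwRun P v m = none := by
  obtain ⟨i, rfl⟩ := Nat.exists_eq_add_of_le hm
  induction i with
  | zero => exact h
  | succ i ih => rw [show k + (i+1) = (k+i) + 1 from rfl, pwRun_succ, ih (Nat.le_add_right k i)]; rfl

lemma pwRun_stuck_unique (P : PWData R X Y) {v : List X} {k k' : ℕ} {s s' : StateW R X Y}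
    (h1 : pwRun P v k = some s) (h2 : pwStep P v s = none)
    (h3 : pwRun P v k' = some s') (h4 : pwStep P v s' = none) : s = s' := by
  rcases lt_trichotomy k k' with h | h | h
  · exfalso
    have : pwRun P v (k + 1) = none := by rw [pwRun_succ, h1]; exact h2
    rw [pwRun_none_mono P this h] at h3; exact absurd h3 (by simp)
  · subst h; rw [h1] at h3; exact Option.some.inj h3
  · exfalso
    have : pwRun P v (k' + 1) = none := by rw [pwRun_succ, h3]; exact h4
    rw [pwRun_none_mono P this h] at h1; exact absurd h1 (by simp)

/-- The machine over base `v` delivers an answer (its stack empties). -/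
def pwDeliv (P : PWData R X Y) (v : List X) : Prop :=
  ∃ (k : ℕ) (a : List X) (n : ℕ) (y : Y),
    pwRun P v k = some ((([] : List R), a), some n, some y)

/-- The machine over base `v` grows forever (never delivers). -/
def pwGrows (P : PWData R X Y) (v : List X) : Prop := ¬ pwDeliv P v

open Classical in
/-- The value delivered by the machine over base `v`, if any. -/
noncomputable def pwDelivVal (P : PWData R X Y) (v : List X) : Option Y :=
  if h : ∃ p : ℕ × List X × ℕ × Y,
      pwRun P v p.1 = some ((([] : List R), p.2.1), some p.2.2.1, some p.2.2.2)
  then some h.choose.2.2.2 else none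

lemma pwDelivVal_eq (P : PWData R X Y) {v : List X} {k : ℕ} {a : List X} {n : ℕ} {y : Y}
    (hk : pwRun P v k = some ((([] : List R), a), some n, some y)) :
    pwDelivVal P v = some y := by
  have h : ∃ p : ℕ × List X × ℕ × Y,
      pwRun P v p.1 = some ((([] : List R), p.2.1), some p.2.2.1, some p.2.2.2) :=
    ⟨(k, a, n, y), hk⟩
  rw [pwDelivVal, dif_pos h]
  have hs := h.choose_spec
  have := pwRun_stuck_unique P hs (pwStep_nil P v _ _ _) hk (pwStep_nil P v _ _ _)
  rw [Prod.ext_iff, Prod.ext_iff, Prod.ext_iff] at this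
  obtain ⟨⟨-, -⟩, -, h2⟩ := this
  simpa using h2

/-- The canonical oracle answer for a total pattern `w` (base ++ query value). -/
noncomputable def pwAlpha (P : PWData R X Y) (w : List X) : Y :=
  if P.p1 (pwPad P w) < w.length then P.p2 (pwPad P w)
  else (pwDelivVal P w).getD (P.p2 (pwPad P w))

/-- The canonical oracle over base pattern `w`. -/
noncomputable def pwF (P : PWData R X Y) (w : List X) : X → Y :=
  fun x => pwAlpha P (w ++ [x])

lemma pwAlpha_q2 (P : PWData R X Y) {w : List X} (h : P.p1 (pwPad P w) < w.length) :
    pwAlpha P w = P.p2 (pwPad P w) := by rw [pwAlpha, if_pos h]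

lemma pwAlpha_deliv (P : PWData R X Y) {w : List X} (hn : ¬ P.p1 (pwPad P w) < w.length)
    {k : ℕ} {a : List X} {n : ℕ} {y : Y}
    (hk : pwRun P w k = some ((([] : List R), a), some n, some y)) :
    pwAlpha P w = y := by
  rw [pwAlpha, if_neg hn, pwDelivVal_eq P hk]; rfl

/-- Lifting an upper configuration by one buried register. -/
def pwLift (r : R) (s : StateW R X Y) : StateW R X Y := ((r :: s.1.1, s.1.2), s.2)

/-- Equivariance: a step of the machine over `v` on a configuration with nonempty stack
below a buried register `r` is a lifted step of the machine over `v ++ [ξ r]`. -/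
lemma pwStep_cons (P : PWData R X Y) (v : List X) (r : R) (τ : List R) (a : List X)
    (pn : Option ℕ) (py : Option Y) (hτ : τ ≠ []) :
    pwStep P v ((r :: τ, a), pn, py) =
      Option.map (pwLift r) (pwStep P (v ++ [P.xi r]) ((τ, a), pn, py)) := by
  obtain ⟨τ', rt, rfl⟩ : ∃ τ' rt, τ = τ' ++ [rt] := by
    rcases List.eq_nil_or_concat τ with h | ⟨L, b, h⟩
    · exact absurd h hτ
    · exact ⟨L, b, by simpa [List.concat_eq_append] using h⟩
  have hmap : ∀ σ : List R, v ++ (r :: σ).map P.xi = (v ++ [P.xi r]) ++ σ.map P.xi := by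
    intro σ; simp
  have hcons : ∀ z : R, r :: (τ' ++ [z]) = (r :: τ') ++ [z] := by intro z; simp
  rcases pn with _ | n <;> rcases py with _ | y
  · -- (none, none)
    rcases a with _ | ⟨x, xs⟩
    · by_cases hq : rt ∈ P.qa
      · rw [hcons, pwStep_q1 P v _ _ hq, pwStep_q1 P (v ++ [P.xi r]) _ _ hq]
        simp [pwLift, hmap]
      · rcases hst : P.stp (rt, none) with _ | ⟨r', _ | y'⟩
        · rw [hcons, pwStep_ci_none P v _ _ hq hst, pwStep_ci_none P _ _ _ hq hst]; rfl
        · rw [hcons, pwStep_ci P v _ _ _ hq hst, pwStep_ci P _ _ _ _ hq hst]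
          simp [pwLift]
        · rw [hcons, pwStep_ci_bad P v _ _ _ _ hq hst, pwStep_ci_bad P _ _ _ _ _ hq hst]; rfl
    · rw [pwStep_a_nn, pwStep_a_nn]; rfl
  · -- (none, some y)
    rw [pwStep_ns, pwStep_ns]; rfl
  · -- (some n, none)
    rcases a with _ | ⟨x, xs⟩
    · have hlen : (v.length + (r :: (τ' ++ [rt])).length)
          = ((v ++ [P.xi r]).length + (τ' ++ [rt]).length) := by simp; omega
      by_cases hlt : n < (v ++ [P.xi r]).length + (τ' ++ [rt]).length
      · rw [pwStep_q2 P v _ n (by simp) (by omega), pwStep_q2 P _ _ n (by simp) hlt]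
        simp [pwLift, hmap]
      · rw [pwStep_ruleA P v _ n (by simp) (by omega), pwStep_ruleA P _ _ n (by simp) hlt]
        simp [pwLift, hmap]
    · rw [pwStep_a_sn, pwStep_a_sn]; rfl
  · -- (some n, some y)
    by_cases hEA : (rt, some y) ∈ P.ea
    · rw [hcons, pwStep_pop P v _ _ _ _ _ hEA, pwStep_pop P _ _ _ _ _ _ hEA]
      simp [pwLift]
    · rcases hst : P.stp (rt, some y) with _ | ⟨r', _ | y'⟩
      · rw [hcons, pwStep_peel_none P v _ _ _ _ _ hEA hst,
          pwStep_peel_none P _ _ _ _ _ _ hEA hst]; rfl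
      · rw [hcons, pwStep_cii P v _ _ _ _ _ _ hEA hst, pwStep_cii P _ _ _ _ _ _ _ hEA hst]
        simp [pwLift]
      · rw [hcons, pwStep_ciii P v _ _ _ _ _ _ _ hEA hst, pwStep_ciii P _ _ _ _ _ _ _ _ hEA hst]
        simp [pwLift]

/-- Tracking: the run over `v` follows the lifted run over `v ++ [ξ r]`. -/
lemma pwTrack (P : PWData R X Y) (v : List X) (r : R) :
    ∀ (i j k : ℕ) (s t : StateW R X Y),
      pwRun P (v ++ [P.xi r]) j = some s →
      pwRun P v k = some (pwLift r s) →
      pwRun P (v ++ [P.xi r]) (j + i) = some t →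
      pwRun P v (k + i) = some (pwLift r t) := by
  intro i
  induction i with
  | zero =>
    intro j k s t hj hk ht
    rw [Nat.add_zero] at ht; rw [hj] at ht
    rwa [Option.some.inj ht] at hk
  | succ i ih =>
    intro j k s t hj hk ht
    rw [show j + (i + 1) = (j + i) + 1 from rfl, pwRun_succ] at ht
    rcases h1 : pwRun P (v ++ [P.xi r]) (j + i) with _ | t₁
    · rw [h1] at ht; exact absurd ht (by simp)
    rw [h1] at ht
    have hstep : pwStep P (v ++ [P.xi r]) t₁ = some t := ht
    have hout := ih j k s t₁ hj hk h1
    have hne : t₁.1.1 ≠ [] := by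
      intro hnil
      have : pwStep P (v ++ [P.xi r]) t₁ = none := by
        have : t₁ = ((t₁.1.1, t₁.1.2), t₁.2) := rfl
        rw [this, hnil]; exact pwStep_nil P _ _ _ _
      rw [this] at hstep; exact absurd hstep (by simp)
    have := pwStep_cons P v r t₁.1.1 t₁.1.2 t₁.2.1 t₁.2.2 hne
    rw [show ((t₁.1.1, t₁.1.2), t₁.2.1, t₁.2.2) = t₁ from rfl] at this
    have : pwStep P v (pwLift r t₁) = some (pwLift r t) := by
      rw [show pwLift r t₁ = ((r :: t₁.1.1, t₁.1.2), t₁.2.1, t₁.2.2) from rfl, this, hstep]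
      rfl
    exact pwRun_step P hout this

/-- Correspondence between a state of `A` and a singleton configuration of the machine. -/
def pwMatch (p : R × Option Y) (s : StateW R X Y) : Prop :=
  (p.2 = none ∧ s = (([p.1], []), none, none)) ∨
  (∃ (a : List X) (n : ℕ) (y : Y), p.2 = some y ∧ s = (([p.1], a), some n, some y))

/-- Main lemma: if the register at the bottom of the machine over `w` runs (on the canonical
oracle) to an end state of `A`, then the machine over `w` either delivers, or grows forever
past some extension `w ++ [x]` with a large `φ₁`-value. -/
theorem pw_main (P : PWData R X Y)
    (hE : ∀ r : R, (r, (none : Option Y)) ∉ P.ea)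
    (hst : ∀ (r r' : R) (o : Option Y) (y : Y),
      P.stp (r, o) = some (r', some y) → o = some y ∧ P.xi r = P.xi r')
    (w : List X) (p e : R × Option Y)
    (D : ReachesA P.xi P.qa P.ea P.stp (pwF P w) p e) :
    e ∈ P.ea → ∀ (k : ℕ) (s : StateW R X Y), pwRun P w k = some s → pwMatch p s →
    pwDeliv P w ∨
      ∃ x : X, w.length + 1 ≤ P.p1 (pwPad P (w ++ [x])) ∧ pwGrows P (w ++ [x]) := by
  induction D with
  | refl s₀ =>
    intro he k s hk hm
    rcases hm with ⟨h2, rfl⟩ | ⟨a, n, y, h2, rfl⟩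
    · exact absurd (show (s₀.1, (none : Option Y)) ∈ P.ea by
        rw [show (s₀.1, (none : Option Y)) = s₀ from Prod.ext rfl h2.symm]; exact he)
        (hE s₀.1)
    · left
      have hEA : (s₀.1, some y) ∈ P.ea := by
        rw [show (s₀.1, some y) = s₀ from Prod.ext rfl h2.symm]; exact he
      have e1 := pwStep_pop P w [] s₀.1 a n y hEA
      simp only [List.nil_append] at e1
      exact ⟨k + 1, P.xi s₀.1 :: a, n, y, pwRun_step P hk e1⟩
  | @oracle r t hne hq D' ih =>
    intro he k s hk hm
    rcases hm with ⟨h2, rfl⟩ | ⟨a, n, y, h2, hs⟩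
    swap
    · exact absurd h2 (by simp)
    have e1 := pwStep_q1 P w [] r hq
    simp only [List.nil_append, List.map_cons, List.map_nil] at e1
    have hk1 : pwRun P w (k + 1) =
        some (([r], []), some (P.p1 (pwPad P (w ++ [P.xi r]))), none) := pwRun_step P hk e1
    set n₀ := P.p1 (pwPad P (w ++ [P.xi r])) with hn₀
    by_cases hlt : n₀ < w.length + 1
    · have e2 := pwStep_q2 P w [r] n₀ (by simp) (by simpa using hlt)
      simp only [List.map_cons, List.map_nil] at e2
      have hk2 := pwRun_step P hk1 e2
      have hf : pwF P w (P.xi r) = P.p2 (pwPad P (w ++ [P.xi r])) := by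
        rw [pwF, pwAlpha_q2 P (by simpa using hlt)]
      exact ih he (k + 2) _ hk2 (Or.inr ⟨[], n₀, pwF P w (P.xi r), rfl, by rw [hf]⟩)
    · have e2 := pwStep_ruleA P w [r] n₀ (by simp) (by simpa using hlt)
      simp only [List.map_cons, List.map_nil] at e2
      have hk2 := pwRun_step P hk1 e2
      by_cases hg : pwGrows P (w ++ [P.xi r])
      · exact Or.inr ⟨P.xi r, Nat.not_lt.mp hlt, hg⟩
      · obtain ⟨k₁, a₁, n₁, y₁, hk₁⟩ := not_not.mp hg
        have hj0 : pwRun P (w ++ [P.xi r]) 0 =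
            some (([P.rho (w ++ [P.xi r])], []), none, none) := rfl
        have hlift : pwRun P w (k + 2) =
            some (pwLift r (([P.rho (w ++ [P.xi r])], []), none, none)) := by
          simpa [pwLift] using hk2
        have htr := pwTrack P w r k₁ 0 (k + 2) _ _ hj0 hlift (by simpa using hk₁)
        have hnlt : ¬ P.p1 (pwPad P (w ++ [P.xi r])) < (w ++ [P.xi r]).length := by
          simpa using hlt
        have hf : pwF P w (P.xi r) = y₁ := by
          rw [pwF, pwAlpha_deliv P hnlt hk₁]
        refine ih he (k + 2 + k₁) _ htr (Or.inr ⟨a₁, n₁, pwF P w (P.xi r), rfl, ?_⟩)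
        rw [hf]; rfl
  | @step sA sA' t hneEA hnq hsA D' ih =>
    intro he k s hk hm
    obtain ⟨r', o'⟩ := sA'
    rcases hm with ⟨h2, rfl⟩ | ⟨a, n, y, h2, hs⟩
    · have hq' : sA.1 ∉ P.qa := hnq h2
      have hsA' : P.stp (sA.1, none) = some (r', o') := by
        rw [show (sA.1, (none : Option Y)) = sA from Prod.ext rfl h2.symm]; exact hsA
      rcases o' with _ | y₀
      · have e1 := pwStep_ci P w [] sA.1 r' hq' hsA'
        simp only [List.nil_append] at e1
        exact ih he (k + 1) _ (pwRun_step P hk e1) (Or.inl ⟨rfl, rfl⟩)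
      · exact absurd (hst sA.1 r' none y₀ hsA').1 (by simp)
    · subst hs
      have hEA' : (sA.1, some y) ∉ P.ea := by
        rw [show (sA.1, some y) = sA from Prod.ext rfl h2.symm]; exact hneEA
      have hsA' : P.stp (sA.1, some y) = some (r', o') := by
        rw [show (sA.1, some y) = sA from Prod.ext rfl h2.symm]; exact hsA
      rcases o' with _ | y'
      · have e1 := pwStep_cii P w [] sA.1 r' a n y hEA' hsA'
        simp only [List.nil_append] at e1
        exact ih he (k + 1) _ (pwRun_step P hk e1) (Or.inl ⟨rfl, rfl⟩)
      · have hy : some y = some y' := (hst sA.1 r' (some y) y' hsA').1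
        have e1 := pwStep_ciii P w [] sA.1 r' a n y y' hEA' hsA'
        simp only [List.nil_append] at e1
        exact ih he (k + 1) _ (pwRun_step P hk e1) (Or.inr ⟨a, n, y, hy.symm, rfl⟩)

/-- Extension: a forever-growing base extends to a forever-growing base with large `φ₁`. -/
theorem pw_ext (P : PWData R X Y)
    (hE : ∀ r : R, (r, (none : Option Y)) ∉ P.ea)
    (hst : ∀ (r r' : R) (o : Option Y) (y : Y),
      P.stp (r, o) = some (r', some y) → o = some y ∧ P.xi r = P.xi r')
    (hterm : ∀ (f : X → Y) (u : List X), ∃ (r : R) (y : Y),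
      (r, some y) ∈ P.ea ∧ ReachesA P.xi P.qa P.ea P.stp f (P.rho u, none) (r, some y))
    (w : List X) (hg : pwGrows P w) :
    ∃ x : X, w.length + 1 ≤ P.p1 (pwPad P (w ++ [x])) ∧ pwGrows P (w ++ [x]) := by
  obtain ⟨rr, yy, hy, D⟩ := hterm (pwF P w) w
  rcases pw_main P hE hst w _ _ D hy 0 _ rfl (Or.inl ⟨rfl, rfl⟩) with h | h
  · exact absurd h hg
  · exact h

lemma pw_not_Q1W_last {Q : Set R} {σ' : List R} {r : R} (hq : r ∉ Q) :
    ¬ Q1W Q (((σ' ++ [r], []), none, none) : StateW R X Y) := by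
  rintro ⟨σ₀, r₀, heq, hr₀⟩
  have h1 : σ' ++ [r] = σ₀ ++ [r₀] := by
    have := congrArg (fun s : StateW R X Y => s.1.1) heq; simpa using this
  have : r = r₀ := by
    have := congrArg List.getLast? h1; simpa [List.getLast?_concat] using this
  exact hq (this ▸ hr₀)

lemma pw_not_Q1W_some {Q : Set R} {σ : List R} {a : List X} {n : ℕ} {py : Option Y} :
    ¬ Q1W Q (((σ, a), some n, py) : StateW R X Y) := by
  rintro ⟨σ₀, r₀, heq, -⟩
  exact absurd (congrArg (fun s : StateW R X Y => s.2.1) heq) (by simp)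

lemma pw_not_Q2W_none {σ : List R} {a : List X} {py : Option Y} :
    ¬ Q2W (((σ, a), none, py) : StateW R X Y) := by
  rintro ⟨σ₀, n₀, heq, -⟩
  exact absurd (congrArg (fun s : StateW R X Y => s.2.1) heq) (by simp)

lemma pw_not_Q2W_somey {σ : List R} {a : List X} {n : ℕ} {y : Y} :
    ¬ Q2W (((σ, a), some n, some y) : StateW R X Y) := by
  rintro ⟨σ₀, n₀, heq, -⟩
  exact absurd (congrArg (fun s : StateW R X Y => s.2.2) heq) (by simp)

lemma pw_not_Q2W_ge {σ : List R} {n : ℕ} (hge : ¬ n < σ.length) :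
    ¬ Q2W (((σ, []), some n, none) : StateW R X Y) := by
  rintro ⟨σ₀, n₀, heq, hlt⟩
  have h1 : σ = σ₀ := by
    have := congrArg (fun s : StateW R X Y => s.1.1) heq; simpa using this
  have h2 : n = n₀ := by
    have := congrArg (fun s : StateW R X Y => s.2.1) heq
    simpa using this
  exact hge (h1 ▸ h2 ▸ hlt)

/-- Soundness of the canonical step function for the unrelativized machine. -/
lemma pwStep_sound (P : PWData R X Y)
    (hst : ∀ (r r' : R) (o : Option Y) (y : Y),
      P.stp (r, o) = some (r', some y) → o = some y ∧ P.xi r = P.xi r')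
    {s t : StateW R X Y} (h : pwStep P [] s = some t) :
    OStepW P.xi P.rho P.qa P.ea P.stp P.xz P.p1 P.p2 s t := by
  obtain ⟨⟨σ, a⟩, pn, py⟩ := s
  rcases List.eq_nil_or_concat σ with rfl | ⟨σ', r, hσ⟩
  · rw [pwStep_nil] at h; exact absurd h (by simp)
  rw [List.concat_eq_append] at hσ
  subst hσ
  have hpad : pwPad P ([] ++ (σ' ++ [r]).map P.xi) = xiW P.xi P.xz (σ' ++ [r]) [] := by
    funext m; simp [pwPad, xiW]
  rcases pn with _ | n <;> rcases py with _ | y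
  · -- (none, none)
    rcases a with _ | ⟨x, xs⟩
    swap
    · rw [pwStep_a_nn] at h; exact absurd h (by simp)
    by_cases hq : r ∈ P.qa
    · rw [pwStep_q1 P [] σ' r hq] at h
      rw [← Option.some.inj h, hpad]
      exact OStepW.q1 σ' r hq
    · rcases hst' : P.stp (r, none) with _ | ⟨r', _ | y₀⟩
      · rw [pwStep_ci_none P [] σ' r hq hst'] at h; exact absurd h (by simp)
      · rw [pwStep_ci P [] σ' r r' hq hst'] at h
        rw [← Option.some.inj h]
        exact OStepW.tr _ _ (pw_not_Q1W_last hq) pw_not_Q2W_none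
          (StepW.ruleCi σ' r r' hst')
      · rw [pwStep_ci_bad P [] σ' r r' y₀ hq hst'] at h; exact absurd h (by simp)
  · -- (none, some y)
    rw [pwStep_ns] at h; exact absurd h (by simp)
  · -- (some n, none)
    rcases a with _ | ⟨x, xs⟩
    swap
    · rw [pwStep_a_sn] at h; exact absurd h (by simp)
    by_cases hlt : n < ([] : List X).length + (σ' ++ [r]).length
    · rw [pwStep_q2 P [] (σ' ++ [r]) n (by simp) hlt] at h
      rw [← Option.some.inj h, hpad]
      exact OStepW.q2 (σ' ++ [r]) n (by simpa using hlt)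
    · rw [pwStep_ruleA P [] (σ' ++ [r]) n (by simp) hlt] at h
      rw [← Option.some.inj h]
      have hres : ([] : List X) ++ (σ' ++ [r]).map P.xi = (σ' ++ [r]).map P.xi := by simp
      rw [hres]
      exact OStepW.tr _ _ pw_not_Q1W_some (pw_not_Q2W_ge (by simpa using hlt))
        (StepW.ruleA (σ' ++ [r]) n)
  · -- (some n, some y)
    by_cases hEA : (r, some y) ∈ P.ea
    · rw [pwStep_pop P [] σ' r a n y hEA] at h
      rw [← Option.some.inj h]
      exact OStepW.tr _ _ pw_not_Q1W_some pw_not_Q2W_somey (StepW.ruleB σ' r a n y hEA)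
    · rcases hst' : P.stp (r, some y) with _ | ⟨r', _ | y'⟩
      · rw [pwStep_peel_none P [] σ' r a n y hEA hst'] at h; exact absurd h (by simp)
      · rw [pwStep_cii P [] σ' r r' a n y hEA hst'] at h
        rw [← Option.some.inj h]
        exact OStepW.tr _ _ pw_not_Q1W_some pw_not_Q2W_somey
          (StepW.ruleCii σ' r r' a n y hst')
      · have hyy : some y = some y' := (hst r r' (some y) y' hst').1
        rw [pwStep_ciii P [] σ' r r' a n y y' hEA hst'] at h
        rw [← Option.some.inj h]
        exact OStepW.tr _ _ pw_not_Q1W_some pw_not_Q2W_somey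
          (StepW.ruleCiii σ' r r' a n y (by rw [hst', ← Option.some.inj hyy]))

lemma pw_reaches_snoc (P : PWData R X Y) {s t u : StateW R X Y}
    (h : ReachesW P.xi P.rho P.qa P.ea P.stp P.xz P.p1 P.p2 s t) (hne : ¬ EW t)
    (ho : OStepW P.xi P.rho P.qa P.ea P.stp P.xz P.p1 P.p2 t u) :
    ReachesW P.xi P.rho P.qa P.ea P.stp P.xz P.p1 P.p2 s u := by
  induction h with
  | refl s' => exact ReachesW.head hne ho (ReachesW.refl u)
  | head h1 h2 _ ih => exact ReachesW.head h1 h2 (ih hne ho)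

lemma pwRun_reaches (P : PWData R X Y)
    (hst : ∀ (r r' : R) (o : Option Y) (y : Y),
      P.stp (r, o) = some (r', some y) → o = some y ∧ P.xi r = P.xi r') :
    ∀ (k : ℕ) (s : StateW R X Y), pwRun P [] k = some s →
      ReachesW P.xi P.rho P.qa P.ea P.stp P.xz P.p1 P.p2 (([P.rho []], []), none, none) s := by
  intro k
  induction k with
  | zero =>
    intro s h
    rw [show pwRun P [] 0 = some ((([P.rho []], []), none, none) : StateW R X Y) from rfl] at h
    rw [← Option.some.inj h]
    exact ReachesW.refl _
  | succ k ih =>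
    intro s h
    rw [pwRun_succ] at h
    rcases h0 : pwRun P [] k with _ | s₀
    · rw [h0] at h; exact absurd h (by simp)
    rw [h0] at h
    have h' : pwStep P [] s₀ = some s := h
    have hne : ¬ EW s₀ := by
      rintro ⟨a, n, y, rfl⟩
      rw [pwStep_nil] at h'; exact absurd h' (by simp)
    exact pw_reaches_snoc P (ih s₀ h0) hne (pwStep_sound P hst h')

/-- The chain of forever-growing bases, built by dependent choice. -/
noncomputable def pwChain (P : PWData R X Y)
    (EXT : ∀ w : List X, pwGrows P w →
      ∃ x : X, w.length + 1 ≤ P.p1 (pwPad P (w ++ [x])) ∧ pwGrows P (w ++ [x]))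
    (g0 : pwGrows P ([] : List X)) : ℕ → {w : List X // pwGrows P w}
  | 0 => ⟨[], g0⟩
  | n + 1 =>
    let p := pwChain P EXT g0 n
    ⟨p.1 ++ [(EXT p.1 p.2).choose], (EXT p.1 p.2).choose_spec.2⟩

lemma pwChain_succ (P : PWData R X Y) (EXT) (g0) (n : ℕ) :
    (pwChain P EXT g0 (n + 1)).1 = (pwChain P EXT g0 n).1 ++
      [(EXT (pwChain P EXT g0 n).1 (pwChain P EXT g0 n).2).choose] := rfl

lemma pwChain_len (P : PWData R X Y) (EXT) (g0) : ∀ n : ℕ, (pwChain P EXT g0 n).1.length = n := by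
  intro n
  induction n with
  | zero => rfl
  | succ n ih =>
    rw [pwChain_succ, List.length_append]
    simp only [List.length_cons, List.length_nil]
    omega

lemma pwChain_bound (P : PWData R X Y) (EXT) (g0) (n : ℕ) :
    n + 1 ≤ P.p1 (pwPad P (pwChain P EXT g0 (n + 1)).1) := by
  have h := (EXT (pwChain P EXT g0 n).1 (pwChain P EXT g0 n).2).choose_spec.1
  calc n + 1 = (pwChain P EXT g0 n).1.length + 1 := by rw [pwChain_len]
    _ ≤ P.p1 (pwPad P ((pwChain P EXT g0 n).1 ++
        [(EXT (pwChain P EXT g0 n).1 (pwChain P EXT g0 n).2).choose])) := h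
    _ = P.p1 (pwPad P (pwChain P EXT g0 (n + 1)).1) := by rw [pwChain_succ]

lemma pwChain_prefix (P : PWData R X Y) (EXT) (g0) (m n : ℕ) (h : m ≤ n) :
    (pwChain P EXT g0 m).1 <+: (pwChain P EXT g0 n).1 := by
  induction n, h using Nat.le_induction with
  | base => exact List.prefix_rfl
  | succ n hmn ih =>
    exact ih.trans (by rw [pwChain_succ]; exact List.prefix_append _ _)


/-- Non-termination yields an unbounded function: if `A` (an approximation algorithm of sort
`X*, X, Y`) terminates on all oracles but `A_ω` fails to terminate on the oracles
`φ₁ : X^ℕ → ℕ` and `φ₂ : X^ℕ → Y`, then there is `γ : ℕ → X` with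
`N ≤ φ₁ (γ̄(N) :: 0^ω)` for all `N`. -/
theorem nontermination_unbounded
    (hE : ∀ r : R, (r, (none : Option Y)) ∉ EA)
    (hstep : ∀ (r r' : R) (o : Option Y) (y : Y),
      stepA (r, o) = some (r', some y) → o = some y ∧ ξA r = ξA r')
    (hterm : ∀ (f : X → Y) (u : List X), ∃ (r : R) (y : Y),
      (r, some y) ∈ EA ∧ ReachesA ξA QA EA stepA f (ρA u, none) (r, some y))
    (φ1 : (ℕ → X) → ℕ) (φ2 : (ℕ → X) → Y)
    (hnonterm : ¬ ∃ t : StateW R X Y, EW t ∧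
      ReachesW ξA ρA QA EA stepA x0 φ1 φ2 (([ρA []], []), none, none) t) :
    ∃ γ : ℕ → X, ∀ N : ℕ, N ≤ φ1 (fun k => if k < N then γ k else x0) := by
  classical
  set P : PWData R X Y := ⟨ξA, ρA, QA, EA, stepA, x0, φ1, φ2⟩ with hP
  have g0 : pwGrows P ([] : List X) := by
    rintro ⟨k, a, n, y, hk⟩
    exact hnonterm ⟨(([], a), some n, some y), ⟨a, n, y, rfl⟩, pwRun_reaches P hstep k _ hk⟩
  have EXT : ∀ w : List X, pwGrows P w →
      ∃ x : X, w.length + 1 ≤ P.p1 (pwPad P (w ++ [x])) ∧ pwGrows P (w ++ [x]) :=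
    fun w hg => pw_ext P hE hstep hterm w hg
  refine ⟨fun k => (pwChain P EXT g0 (k + 1)).1.getD k x0, ?_⟩
  intro N
  have hpad : (fun k => if k < N then (pwChain P EXT g0 (k + 1)).1.getD k x0 else x0)
      = pwPad P (pwChain P EXT g0 N).1 := by
    funext k
    by_cases hk : k < N
    · rw [if_pos hk]
      obtain ⟨t, ht⟩ := pwChain_prefix P EXT g0 (k + 1) N hk
      show (pwChain P EXT g0 (k + 1)).1.getD k x0 = (pwChain P EXT g0 N).1.getD k x0
      rw [← ht, List.getD_append]
      rw [pwChain_len]; omega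
    · rw [if_neg hk]
      show x0 = (pwChain P EXT g0 N).1.getD k x0
      symm
      apply List.getD_eq_default
      rw [pwChain_len]; omega
  show N ≤ φ1 (fun k => if k < N then (pwChain P EXT g0 (k + 1)).1.getD k x0 else x0)
  rw [hpad]
  cases N with
  | zero => exact Nat.zero_le _
  | succ n => exact pwChain_bound P EXT g0 n

end
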